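/- For every rooted tree T and every non-root vertex v of T, the row of B_T indexed by the edge e(v) satisfies b_T^{e(v)} = Σ_{k ∈ desLv(v)} a_T^k − 2·Σ_{k ∈ desInt(v)} a_T^k as vectors indexed by the 2-element subsets of {0,…,n}, where desLv(v) is the set of leaves of T that are descendants of v and desInt(v) is the set of internal vertices of T that are descendants of v. -/

import Mathlib

attribute [local instance] Classical.propDecidable

/-- A rooted tree on leaves `0, …, n`, rooted at the leaf `0`, with all edges directed
away from the root, no vertices of degree two, together with its (uniquely determined)
most-recent-common-ancestor function `lca` on leaf labels.  The parent map `par` sends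
every non-root vertex to the vertex its unique incoming edge comes from, and fixes the
root.  A vertex `u` is a descendant of `v` iff some iterate of `par` sends `u` to `v`. -/
structure PhyloTree where
  n : ℕ
  hn : 1 ≤ n
  V : Type
  fintypeV : Fintype V
  leaf : Fin (n + 1) ↪ V
  par : V → V
  par_root : par (leaf 0) = leaf 0
  par_ne : ∀ v : V, v ≠ leaf 0 → par v ≠ v
  reaches_root : ∀ v : V, ∃ k : ℕ, par^[k] v = leaf 0
  leaf_iff : ∀ v : V, v ≠ leaf 0 → (v ∈ Set.range leaf ↔ ∀ u, par u ≠ v)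
  root_unique_child : ∃! u : V, u ≠ leaf 0 ∧ par u = leaf 0
  no_degree_two : ∀ v : V, v ∉ Set.range leaf → ∃ u w : V, u ≠ w ∧ par u = v ∧ par w = v
  lca : Fin (n + 1) → Fin (n + 1) → V
  lca_anc_left : ∀ i j, ∃ k : ℕ, par^[k] (leaf i) = lca i j
  lca_anc_right : ∀ i j, ∃ k : ℕ, par^[k] (leaf j) = lca i j
  lca_min : ∀ i j (w : V), (∃ k : ℕ, par^[k] (leaf i) = w) →
      (∃ k : ℕ, par^[k] (leaf j) = w) → ∃ k : ℕ, par^[k] (lca i j) = w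

instance (T : PhyloTree) : Fintype T.V := T.fintypeV

/-- `T.isAnc v u` : `v` is an ancestor of `u`, i.e. `u` is a descendant of `v`
(every vertex is a descendant of itself). -/
def PhyloTree.isAnc (T : PhyloTree) (v u : T.V) : Prop := ∃ k : ℕ, T.par^[k] u = v

/-- The 2-element subsets `{i,j}` of `{0, …, n}`, encoded as ordered pairs `i < j`. -/
abbrev PairIdx (n : ℕ) := {q : Fin (n + 1) × Fin (n + 1) // q.1 < q.2}

/-- The non-root vertices of `T`; these index the rows of `A_T`, and are also in
bijection `v ↦ e(v)` with the edges of `T`, so they also index the rows of `B_T`. -/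
abbrev PhyloTree.NR (T : PhyloTree) := {v : T.V // v ≠ T.leaf 0}

/-- The matrix `A_T`, with rows indexed by non-root vertices and columns indexed by
2-element subsets `{i,j}` of `{0, …, n}`: the entry is `1` if `v = i`, `v = j` or
`v = lca(i,j)`, and `0` otherwise. -/
noncomputable def Amat (T : PhyloTree) (R : Type*) [Zero R] [One R] :
    Matrix T.NR (PairIdx T.n) R :=
  Matrix.of fun v s =>
    if v.1 = T.leaf s.1.1 ∨ v.1 = T.leaf s.1.2 ∨ v.1 = T.lca s.1.1 s.1.2 then 1 else 0

/-- `T.onPath v i j` : the edge `e(v)` lies on the unique path between the leaves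
`i` and `j`, i.e. `v` lies strictly below `lca(i,j)` on the segment from `lca(i,j)`
down to `i` or on the segment from `lca(i,j)` down to `j`. -/
def PhyloTree.onPath (T : PhyloTree) (v : T.V) (i j : Fin (T.n + 1)) : Prop :=
  v ≠ T.lca i j ∧ T.isAnc (T.lca i j) v ∧ (T.isAnc v (T.leaf i) ∨ T.isAnc v (T.leaf j))

/-- The matrix `B_T`, with rows indexed by the edges `e(v)` of `T` (equivalently, by the
non-root vertices `v`) and columns indexed by 2-element subsets `{i,j}` of `{0, …, n}`:
the entry is `1` if `e(v) ∈ P(i,j)` and `0` otherwise. -/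
noncomputable def Bmat (T : PhyloTree) (R : Type*) [Zero R] [One R] :
    Matrix T.NR (PairIdx T.n) R :=
  Matrix.of fun v s => if T.onPath v.1 s.1.1 s.1.2 then 1 else 0

/-- The monomial map `φ_M` associated to a nonnegative-integer matrix `M`, sending
`p_c` to `∏_r t_r ^ M(r,c)`. -/
noncomputable def toricMap {R C : Type*} [Fintype R] (M : Matrix R C ℕ) :
    MvPolynomial C ℂ →ₐ[ℂ] MvPolynomial R ℂ :=
  MvPolynomial.aeval fun c => ∏ r : R, MvPolynomial.X r ^ M r c
namespace PhyloTree

lemma root_fix (T : PhyloTree) (k : ℕ) : T.par^[k] (T.leaf 0) = T.leaf 0 :=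
  Function.iterate_fixed T.par_root k

lemma eq_root_of_isAnc_root (T : PhyloTree) {w : T.V} (h : T.isAnc w (T.leaf 0)) :
    w = T.leaf 0 := by
  obtain ⟨k, hk⟩ := h
  rw [T.root_fix] at hk
  exact hk.symm

lemma eq_root_of_periodic (T : PhyloTree) {a : T.V} {m : ℕ} (hm : 0 < m)
    (h : T.par^[m] a = a) : a = T.leaf 0 := by
  obtain ⟨N, hN⟩ := T.reaches_root a
  have key : ∀ q : ℕ, T.par^[q * m] a = a := by
    intro q
    induction q with
    | zero => simp
    | succ q ih =>
        rw [Nat.succ_mul, Function.iterate_add_apply, h, ih]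
  have hle : N ≤ N * m := Nat.le_mul_of_pos_right N hm
  calc a = T.par^[N * m] a := (key N).symm
    _ = T.par^[N * m - N] (T.par^[N] a) := by
        rw [← Function.iterate_add_apply, Nat.sub_add_cancel hle]
    _ = T.leaf 0 := by rw [hN, T.root_fix]

lemma isAnc_antisymm (T : PhyloTree) {a b : T.V} (h1 : T.isAnc a b) (h2 : T.isAnc b a) :
    a = b := by
  obtain ⟨k, hk⟩ := h1
  obtain ⟨l, hl⟩ := h2
  rcases Nat.eq_zero_or_pos (k + l) with h | h
  · obtain ⟨hk0, hl0⟩ := Nat.add_eq_zero.mp h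
    subst hk0
    exact hk.symm
  · have hper : T.par^[k + l] a = a := by
      rw [Function.iterate_add_apply, hl, hk]
    have ha := T.eq_root_of_periodic h hper
    have hb : b = T.leaf 0 := by rw [← hl, ha, T.root_fix]
    rw [ha, hb]

lemma isAnc_of_eq (T : PhyloTree) {a b c : T.V} (h : T.isAnc a b) (e : b = c) :
    T.isAnc a c := e ▸ h

lemma isAnc_trans (T : PhyloTree) {a b c : T.V} (h1 : T.isAnc a b) (h2 : T.isAnc b c) :
    T.isAnc a c := by
  obtain ⟨k, hk⟩ := h1
  obtain ⟨l, hl⟩ := h2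
  exact ⟨k + l, by rw [Function.iterate_add_apply, hl, hk]⟩

lemma isAnc_comp (T : PhyloTree) {a b u : T.V} (h1 : T.isAnc a u) (h2 : T.isAnc b u) :
    T.isAnc a b ∨ T.isAnc b a := by
  obtain ⟨k, hk⟩ := h1
  obtain ⟨l, hl⟩ := h2
  rcases le_total k l with h | h
  · right
    exact ⟨l - k, by rw [← hk, ← Function.iterate_add_apply, Nat.sub_add_cancel h, hl]⟩
  · left
    exact ⟨k - l, by rw [← hl, ← Function.iterate_add_apply, Nat.sub_add_cancel h, hk]⟩

lemma no_child_of_leaf (T : PhyloTree) {m : Fin (T.n + 1)} (hm : m ≠ 0) (u : T.V) :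
    T.par u ≠ T.leaf m := by
  have hne : T.leaf m ≠ T.leaf 0 := fun h => hm (T.leaf.injective h)
  exact (T.leaf_iff _ hne).mp ⟨m, rfl⟩ u

lemma eq_of_isAnc_leaf (T : PhyloTree) {m : Fin (T.n + 1)} (hm : m ≠ 0) {w : T.V}
    (h : T.isAnc (T.leaf m) w) : w = T.leaf m := by
  obtain ⟨k, hk⟩ := h
  cases k with
  | zero => exact hk
  | succ k =>
      rw [Function.iterate_succ_apply'] at hk
      exact absurd hk (T.no_child_of_leaf hm _)

lemma lca_not_leaf (T : PhyloTree) {i j : Fin (T.n + 1)} (hij : i ≠ j)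
    (h : T.lca i j ≠ T.leaf 0) : T.lca i j ∉ Set.range T.leaf := by
  rintro ⟨m, hm⟩
  have hm0 : m ≠ 0 := fun h0 => h (by rw [← hm, h0])
  have h1 : T.isAnc (T.leaf m) (T.leaf i) := hm ▸ T.lca_anc_left i j
  have h2 : T.isAnc (T.leaf m) (T.leaf j) := hm ▸ T.lca_anc_right i j
  have hi : i = m := T.leaf.injective (T.eq_of_isAnc_leaf hm0 h1)
  have hj : j = m := T.leaf.injective (T.eq_of_isAnc_leaf hm0 h2)
  exact hij (hi.trans hj.symm)

end PhyloTree

/-- For every rooted tree `T` and every non-root vertex `v` of `T`, the row of `B_T`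
indexed by the edge `e(v)` equals `∑_{k ∈ desLv(v)} a_T^k − 2 ∑_{k ∈ desInt(v)} a_T^k`,
where `desLv(v)` is the set of leaves of `T` that are descendants of `v` and
`desInt(v)` is the set of internal vertices of `T` that are descendants of `v`. -/
theorem statement4 (T : PhyloTree) (v : T.NR) :
    Bmat T ℚ v =
      (∑ k ∈ Finset.univ.filter
          (fun k : T.NR => k.1 ∈ Set.range T.leaf ∧ T.isAnc v.1 k.1), Amat T ℚ k)
      - 2 • ∑ k ∈ Finset.univ.filter
          (fun k : T.NR => k.1 ∉ Set.range T.leaf ∧ T.isAnc v.1 k.1), Amat T ℚ k := by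
  classical
  funext s
  obtain ⟨⟨i, j⟩, hij⟩ := s
  have hijne : i ≠ j := ne_of_lt hij
  have hvne := v.2
  have hroot_not : ¬ T.isAnc v.1 (T.leaf 0) := fun h => hvne (T.eq_root_of_isAnc_root h)
  have hLi : T.isAnc (T.lca i j) (T.leaf i) := T.lca_anc_left i j
  have hLj : T.isAnc (T.lca i j) (T.leaf j) := T.lca_anc_right i j
  simp only [Pi.sub_apply, Pi.smul_apply, Finset.sum_apply, Bmat, Amat, Matrix.of_apply,
    Finset.sum_filter]
  erw [Finset.sum_apply, Finset.sum_apply]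
  simp only [Matrix.of_apply, Finset.sum_filter]
  by_cases hD : T.isAnc v.1 (T.lca i j)
  · -- lca is a descendant of v : both leaves descend, onPath is false
    have hLroot : T.lca i j ≠ T.leaf 0 := fun h => hroot_not (T.isAnc_of_eq hD h)
    have hLleaf : T.lca i j ∉ Set.range T.leaf := T.lca_not_leaf hijne hLroot
    have hdi : T.isAnc v.1 (T.leaf i) := T.isAnc_trans hD hLi
    have hdj : T.isAnc v.1 (T.leaf j) := T.isAnc_trans hD hLj
    have hi0 : T.leaf i ≠ T.leaf 0 := fun h => hroot_not (T.isAnc_of_eq hdi h)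
    have hj0 : T.leaf j ≠ T.leaf 0 := fun h => hroot_not (T.isAnc_of_eq hdj h)
    have hnp : ¬ T.onPath v.1 i j := by
      rintro ⟨hne, hanc, -⟩
      exact hne (T.isAnc_antisymm hD hanc)
    have hsum1 : ∀ k : T.NR,
        (if k.1 ∈ Set.range T.leaf ∧ T.isAnc v.1 k.1 then
          (if k.1 = T.leaf i ∨ k.1 = T.leaf j ∨ k.1 = T.lca i j then (1 : ℚ) else 0)
          else 0)
        = (if k = ⟨T.leaf i, hi0⟩ then 1 else 0) + (if k = ⟨T.leaf j, hj0⟩ then 1 else 0) := by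
      intro k
      by_cases h1 : k.1 = T.leaf i
      · have : k = ⟨T.leaf i, hi0⟩ := Subtype.ext h1
        subst this
        have : (⟨T.leaf i, hi0⟩ : T.NR) ≠ ⟨T.leaf j, hj0⟩ := by
          intro h; exact hijne (T.leaf.injective (congrArg Subtype.val h))
        simp [h1, hdi, this]
      · by_cases h2 : k.1 = T.leaf j
        · have : k = ⟨T.leaf j, hj0⟩ := Subtype.ext h2
          subst this
          have hne' : (⟨T.leaf j, hj0⟩ : T.NR) ≠ ⟨T.leaf i, hi0⟩ := by
            intro h; exact hijne (T.leaf.injective (congrArg Subtype.val h)).symm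
          simp [h2, hdj, h1, Subtype.ext_iff]
        · have hk1 : k ≠ ⟨T.leaf i, hi0⟩ := fun h => h1 (congrArg Subtype.val h)
          have hk2 : k ≠ ⟨T.leaf j, hj0⟩ := fun h => h2 (congrArg Subtype.val h)
          simp only [if_neg hk1, if_neg hk2, add_zero]
          by_cases h3 : k.1 = T.lca i j
          · have : k.1 ∉ Set.range T.leaf := h3 ▸ hLleaf
            simp [this]
          · simp [h1, h2, h3]
    have hsum2 : ∀ k : T.NR,
        (if k.1 ∉ Set.range T.leaf ∧ T.isAnc v.1 k.1 then
          (if k.1 = T.leaf i ∨ k.1 = T.leaf j ∨ k.1 = T.lca i j then (1 : ℚ) else 0)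
          else 0)
        = (if k = ⟨T.lca i j, hLroot⟩ then 1 else 0) := by
      intro k
      by_cases h3 : k.1 = T.lca i j
      · have : k = ⟨T.lca i j, hLroot⟩ := Subtype.ext h3
        subst this
        simp [h3, hLleaf, hD]
      · have hk3 : k ≠ ⟨T.lca i j, hLroot⟩ := fun h => h3 (congrArg Subtype.val h)
        simp only [if_neg hk3]
        by_cases h1 : k.1 = T.leaf i
        · have : k.1 ∈ Set.range T.leaf := ⟨i, h1.symm⟩
          simp [this]
        · by_cases h2 : k.1 = T.leaf j
          · have : k.1 ∈ Set.range T.leaf := ⟨j, h2.symm⟩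
            simp [this]
          · simp [h1, h2, h3]
    rw [Finset.sum_congr rfl (fun k _ => hsum1 k), Finset.sum_congr rfl (fun k _ => hsum2 k),
      Finset.sum_add_distrib]
    simp only [Finset.sum_ite_eq', Finset.mem_univ, if_pos, if_true, if_neg hnp]
    norm_num
  · -- lca is not a descendant of v
    have hnot_both : ¬ (T.isAnc v.1 (T.leaf i) ∧ T.isAnc v.1 (T.leaf j)) := by
      rintro ⟨h1, h2⟩
      exact hD (T.lca_min i j v.1 h1 h2)
    have hsum2 : ∀ k : T.NR,
        (if k.1 ∉ Set.range T.leaf ∧ T.isAnc v.1 k.1 then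
          (if k.1 = T.leaf i ∨ k.1 = T.leaf j ∨ k.1 = T.lca i j then (1 : ℚ) else 0)
          else 0) = 0 := by
      intro k
      by_cases hP : k.1 ∉ Set.range T.leaf ∧ T.isAnc v.1 k.1
      · rw [if_pos hP]
        have h1 : k.1 ≠ T.leaf i := fun h => hP.1 ⟨i, h.symm⟩
        have h2 : k.1 ≠ T.leaf j := fun h => hP.1 ⟨j, h.symm⟩
        have h3 : k.1 ≠ T.lca i j := fun h => hD (T.isAnc_of_eq hP.2 h)
        simp [h1, h2, h3]
      · rw [if_neg hP]
    rw [Finset.sum_congr rfl (fun k _ => hsum2 k), Finset.sum_const_zero]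
    -- helper for the leaf sum when exactly one leaf descends from v
    have key : ∀ (a b : Fin (T.n + 1)) (ha0 : T.leaf a ≠ T.leaf 0), a ≠ b →
        (T.leaf a = T.leaf i ∨ T.leaf a = T.leaf j) →
        (T.leaf b = T.leaf i ∨ T.leaf b = T.leaf j) →
        T.isAnc v.1 (T.leaf a) → ¬ T.isAnc v.1 (T.leaf b) →
        ∀ k : T.NR,
          (if k.1 ∈ Set.range T.leaf ∧ T.isAnc v.1 k.1 then
            (if k.1 = T.leaf i ∨ k.1 = T.leaf j ∨ k.1 = T.lca i j then (1 : ℚ) else 0)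
            else 0)
          = (if k = ⟨T.leaf a, ha0⟩ then 1 else 0) := by
      intro a b ha0 hab ha hb hda hdb k
      by_cases h1 : k.1 = T.leaf a
      · have hk : k = ⟨T.leaf a, ha0⟩ := Subtype.ext h1
        rw [if_pos hk, if_pos ⟨⟨a, h1.symm⟩, T.isAnc_of_eq hda h1.symm⟩, if_pos]
        rcases ha with h | h
        · exact Or.inl (h1.trans h)
        · exact Or.inr (Or.inl (h1.trans h))
      · have hk : k ≠ ⟨T.leaf a, ha0⟩ := fun h => h1 (congrArg Subtype.val h)
        rw [if_neg hk]
        by_cases hP : k.1 ∈ Set.range T.leaf ∧ T.isAnc v.1 k.1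
        · rw [if_pos hP, if_neg]
          rintro (h | h | h)
          · rcases ha with ha' | ha'
            · exact h1 (h.trans ha'.symm)
            · rcases hb with hb' | hb'
              · exact hdb (by rw [hb', ← h]; exact hP.2)
              · exact hab (T.leaf.injective (ha'.trans hb'.symm))
          · rcases ha with ha' | ha'
            · rcases hb with hb' | hb'
              · exact hab (T.leaf.injective (ha'.trans hb'.symm))
              · exact hdb (by rw [hb', ← h]; exact hP.2)
            · exact h1 (h.trans ha'.symm)
          · exact hD (T.isAnc_of_eq hP.2 h)
        · rw [if_neg hP]
    by_cases hdi : T.isAnc v.1 (T.leaf i)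
    · have hdj : ¬ T.isAnc v.1 (T.leaf j) := fun h => hnot_both ⟨hdi, h⟩
      have hileaf : T.leaf i ≠ T.leaf j := fun h => hijne (T.leaf.injective h)
      have hop : T.onPath v.1 i j := by
        refine ⟨fun h => hD (T.isAnc_of_eq ⟨0, rfl⟩ h), ?_, Or.inl hdi⟩
        rcases T.isAnc_comp hLi hdi with h | h
        · exact h
        · exact absurd h hD
      rw [Finset.sum_congr rfl
        (fun k _ => key i j (fun h => hroot_not (T.isAnc_of_eq hdi h)) hijne
          (Or.inl rfl) (Or.inr rfl) hdi hdj k)]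
      simp only [Finset.sum_ite_eq', Finset.mem_univ, if_true, if_pos hop]
      norm_num
    · by_cases hdj : T.isAnc v.1 (T.leaf j)
      · have hop : T.onPath v.1 i j := by
          refine ⟨fun h => hD (T.isAnc_of_eq ⟨0, rfl⟩ h), ?_, Or.inr hdj⟩
          rcases T.isAnc_comp hLj hdj with h | h
          · exact h
          · exact absurd h hD
        rw [Finset.sum_congr rfl
          (fun k _ => key j i (fun h => hroot_not (T.isAnc_of_eq hdj h)) hijne.symm
            (Or.inr rfl) (Or.inl rfl) hdj hdi k)]
        simp only [Finset.sum_ite_eq', Finset.mem_univ, if_true, if_pos hop]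
        norm_num
      · have hnp : ¬ T.onPath v.1 i j := by
          rintro ⟨-, -, h | h⟩
          · exact hdi h
          · exact hdj h
        have hsum1 : ∀ k : T.NR,
            (if k.1 ∈ Set.range T.leaf ∧ T.isAnc v.1 k.1 then
              (if k.1 = T.leaf i ∨ k.1 = T.leaf j ∨ k.1 = T.lca i j then (1 : ℚ) else 0)
              else 0) = 0 := by
          intro k
          by_cases hP : k.1 ∈ Set.range T.leaf ∧ T.isAnc v.1 k.1
          · rw [if_pos hP, if_neg]
            rintro (h | h | h)
            · exact hdi (T.isAnc_of_eq hP.2 h)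
            · exact hdj (T.isAnc_of_eq hP.2 h)
            · exact hD (T.isAnc_of_eq hP.2 h)
          · rw [if_neg hP]
        rw [Finset.sum_congr rfl (fun k _ => hsum1 k), Finset.sum_const_zero]
        simp [hnp]
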